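/- The kernel of the shifted matrix C − (1/2)·I is exactly the two-dimensional subspace spanned by e₁ and R_y(π/4)·e₁: for x ∈ ℝ⁷, (C − (1/2)·I)·x = 0 if and only if x is a linear combination of e₁ and R_y(π/4)·e₁. -/

import Mathlib

open Matrix Real MeasureTheory

noncomputable def Rz (γ : ℝ) : Matrix (Fin 7) (Fin 7) ℝ :=
  !![Real.cos (3*γ), 0, 0, 0, 0, 0, Real.sin (3*γ);
     0, Real.cos (2*γ), 0, 0, 0, Real.sin (2*γ), 0;
     0, 0, Real.cos γ, 0, Real.sin γ, 0, 0;
     0, 0, 0, 1, 0, 0, 0;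
     0, 0, -Real.sin γ, 0, Real.cos γ, 0, 0;
     0, -Real.sin (2*γ), 0, 0, 0, Real.cos (2*γ), 0;
     -Real.sin (3*γ), 0, 0, 0, 0, 0, Real.cos (3*γ)]

noncomputable def X : Matrix (Fin 7) (Fin 7) ℝ :=
  (1/4 : ℝ) • !![0, 0, 0, Real.sqrt 10, 0, -Real.sqrt 6, 0;
     0, -4, 0, 0, 0, 0, 0;
     0, 0, 0, Real.sqrt 6, 0, Real.sqrt 10, 0;
     -Real.sqrt 10, 0, -Real.sqrt 6, 0, 0, 0, 0;
     0, 0, 0, 0, -1, 0, -Real.sqrt 15;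
     Real.sqrt 6, 0, -Real.sqrt 10, 0, 0, 0, 0;
     0, 0, 0, 0, -Real.sqrt 15, 0, 1]

noncomputable def Ry (β : ℝ) : Matrix (Fin 7) (Fin 7) ℝ := X * Rz β * Xᵀ

noncomputable def e (i : Fin 7) : Fin 7 → ℝ := Pi.single i 1

noncomputable def C : Matrix (Fin 7) (Fin 7) ℝ :=
  !![13/16, 0, Real.sqrt 15 / 16, 0, 0, 0, 0;
     0, 1/2, 0, 0, 0, 0, 0;
     Real.sqrt 15 / 16, 0, 11/16, 0, 0, 0, 0;
     0, 0, 0, 49/64, 0, -(Real.sqrt 15 / 64), 0;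
     0, 0, 0, 0, 103/128, 0, -(Real.sqrt 15 / 128);
     0, 0, 0, -(Real.sqrt 15 / 64), 0, 47/64, 0;
     0, 0, 0, 0, -(Real.sqrt 15 / 128), 0, 89/128]

@[simp] lemma cons_val_five' {α : Type*} (a : α) (u : Fin 6 → α) : Matrix.vecCons a u 5 = u 4 := rfl
@[simp] lemma cons_val_six' {α : Type*} (a : α) (u : Fin 6 → α) : Matrix.vecCons a u 6 = u 5 := rfl
@[simp] lemma cons_val_five'' {α : Type*} (a : α) (u : Fin 5 → α) : Matrix.vecCons a u 5 = u 4 := rfl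
@[simp] lemma cons_val_four'' {α : Type*} (a : α) (u : Fin 5 → α) : Matrix.vecCons a u 4 = u 3 := rfl

lemma vlem : Ry (Real.pi/4) *ᵥ e 1 = ![-(Real.sqrt 6)/4, 0, Real.sqrt 10/4, 0, 0, 0, 0] := by
  have h2 : Real.cos (2*(Real.pi/4)) = 0 := by
    rw [show (2:ℝ)*(Real.pi/4) = Real.pi/2 by ring, Real.cos_pi_div_two]
  have h2' : Real.sin (2*(Real.pi/4)) = 1 := by
    rw [show (2:ℝ)*(Real.pi/4) = Real.pi/2 by ring, Real.sin_pi_div_two]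
  have hXT : Xᵀ *ᵥ e 1 = ![0, -1, 0, 0, 0, 0, 0] := by
    funext i
    fin_cases i <;>
      simp [X, e, Matrix.mulVec, Fin.sum_univ_seven, Pi.single_apply,
        Matrix.transpose_apply]
  have hRz : Rz (Real.pi/4) *ᵥ ![0, -1, 0, 0, 0, 0, 0] = ![0, 0, 0, 0, 0, 1, 0] := by
    funext i
    fin_cases i <;>
      (simp [Rz, Matrix.mulVec, dotProduct, Fin.sum_univ_seven, h2, h2']; try rfl)
  have hX : X *ᵥ ![0, 0, 0, 0, 0, 1, 0] = ![-(Real.sqrt 6)/4, 0, Real.sqrt 10/4, 0, 0, 0, 0] := by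
    funext i
    fin_cases i <;>
      (simp [X, Matrix.mulVec, dotProduct, Fin.sum_univ_seven]; try ring)
  rw [Ry, ← Matrix.mulVec_mulVec, ← Matrix.mulVec_mulVec, hXT, hRz, hX]

theorem C_shifted_kernel (x : Fin 7 → ℝ) :
    (C - (1/2 : ℝ) • (1 : Matrix (Fin 7) (Fin 7) ℝ)) *ᵥ x = 0 ↔
      ∃ a b : ℝ, x = a • e 1 + b • (Ry (Real.pi / 4) *ᵥ e 1) := by
  have hs15 : Real.sqrt 15 * Real.sqrt 15 = 15 := Real.mul_self_sqrt (by norm_num)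
  have h10 : (0:ℝ) < Real.sqrt 10 := Real.sqrt_pos.mpr (by norm_num)
  have h150 : Real.sqrt 10 * Real.sqrt 15 = 5 * Real.sqrt 6 := by
    rw [← Real.sqrt_mul (by norm_num : (0:ℝ) ≤ 10), show (10:ℝ)*15 = 5^2*6 by norm_num,
      Real.sqrt_mul (by positivity), Real.sqrt_sq (by norm_num : (0:ℝ) ≤ 5)]
  have h90 : Real.sqrt 15 * Real.sqrt 6 = 3 * Real.sqrt 10 := by
    rw [← Real.sqrt_mul (by norm_num : (0:ℝ) ≤ 15), show (15:ℝ)*6 = 3^2*10 by norm_num,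
      Real.sqrt_mul (by positivity), Real.sqrt_sq (by norm_num : (0:ℝ) ≤ 3)]
  rw [vlem]
  constructor
  · intro h
    have e0 := congrFun h 0
    have e2 := congrFun h 2
    have e3 := congrFun h 3
    have e4 := congrFun h 4
    have e5 := congrFun h 5
    have e6 := congrFun h 6
    simp [C, Matrix.mulVec, dotProduct, Fin.sum_univ_seven, Matrix.sub_apply,
      Matrix.smul_apply, Matrix.one_apply, Matrix.vecHead, Matrix.vecTail]
      at e0 e2 e3 e4 e5 e6
    have hx5 : x 5 = 0 := by
      linear_combination (64*Real.sqrt 15/240)*e3 + (64*17/240)*e5 + (x 5/240)*hs15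
    have hx3 : x 3 = 0 := by
      linear_combination (64/17)*e3 + (Real.sqrt 15/17)*hx5
    have hx6 : x 6 = 0 := by
      linear_combination (128*Real.sqrt 15/960)*e4 + (128*39/960)*e6 + (x 6/960)*hs15
    have hx4 : x 4 = 0 := by
      linear_combination (128/39)*e4 + (Real.sqrt 15/39)*hx6
    refine ⟨x 1, 4/Real.sqrt 10 * x 2, ?_⟩
    funext i
    fin_cases i <;>
      simp [e, Pi.single_apply, hx3, hx4, hx5, hx6]
    · have hx0 : x 0 = -(Real.sqrt 15/5) * x 2 := by linear_combination (16/5)*e0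
      field_simp
      linear_combination Real.sqrt 10*hx0 - (x 2/5)*h150
    · field_simp
  · rintro ⟨a, b, rfl⟩
    funext i
    fin_cases i <;>
      simp [C, e, Matrix.mulVec, dotProduct, Fin.sum_univ_seven, Matrix.sub_apply,
        Matrix.smul_apply, Matrix.one_apply, Pi.single_apply]
    · linear_combination (b/64)*h150
    · linear_combination -(b/64)*h90
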